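/- Let m and n be distinct positive integers, let s be a nonempty finite sequence of positive integers, let k ≥ j > 0, and let t^(1), t^(2) be sequences in {m, n}^k. Then t^(1) and t^(2) agree in their first j terms if and only if C_{m,n}(s, t^(1)) and C_{m,n}(s, t^(2)) agree in their first j terms. -/

import Mathlib

/-- `expand1 m n x s` : the expansion `E_{m,n}(s, x)` of the finite sequence `s` with the
single starting point `x ∈ {m, n}`: the unique sequence with values in `{m, n}`, first term
`x`, and run-lengths `s`. -/
def expand1 (m n : ℕ) : ℕ → List ℕ → List ℕ
  | _, [] => []
  | x, a :: l => List.replicate a x ++ expand1 m n (m + n - x) l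

/-- `expand m n s t` : the expansion `E_{m,n}(s, t)` of the finite sequence `s` with the
finite sequence of starting points `t` (values in `{m, n}`), defined by
`E_{m,n}(s, t₁ t') = E_{m,n}(E_{m,n}(s, t₁), t')`. -/
def expand (m n : ℕ) : List ℕ → List ℕ → List ℕ
  | s, [] => s
  | s, x :: t => expand m n (expand1 m n x s) t

/-- `torsion m n s t` : the torsion `C_{m,n}(s, t)`, the sequence of the same length as `t`
whose `k`-th term equals `m + n` minus the last term of `E_{m,n}(s, t⁽ᵏ⁾)`, where `t⁽ᵏ⁾`
consists of the first `k` terms of `t`. -/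
def torsion (m n : ℕ) (s t : List ℕ) : List ℕ :=
  (List.range t.length).map fun k => m + n - (expand m n s (t.take (k + 1))).getLastD 0

/-- For `k ≥ j > 0` and `t⁽¹⁾, t⁽²⁾ ∈ {m, n}^k`, the sequences `t⁽¹⁾, t⁽²⁾` agree in their
first `j` terms iff `C_{m,n}(s, t⁽¹⁾), C_{m,n}(s, t⁽²⁾)` agree in their first `j` terms. -/
lemma getLastD_append_right (l r : List ℕ) (h : r ≠ []) (d : ℕ) :
    (l ++ r).getLastD d = r.getLastD d := by
  rw [List.getLastD_eq_getLast?, List.getLastD_eq_getLast?,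
    List.getLast?_append_of_ne_nil _ h]

lemma expand1_ne_nil (m n x : ℕ) (w : List ℕ) (hw : w ≠ []) (hp : ∀ a ∈ w, 0 < a) :
    expand1 m n x w ≠ [] := by
  cases w with
  | nil => exact absurd rfl hw
  | cons a l =>
    have ha := hp a (by simp)
    simp [expand1]
    intro h
    omega

lemma mem_expand1 (m n : ℕ) : ∀ (w : List ℕ) (x : ℕ), (x = m ∨ x = n) →
    ∀ a ∈ expand1 m n x w, a = m ∨ a = n := by
  intro w
  induction w with
  | nil => simp [expand1]
  | cons b l ih =>
    intro x hx a ha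
    simp only [expand1, List.mem_append, List.mem_replicate] at ha
    rcases ha with ⟨_, rfl⟩ | ha
    · exact hx
    · exact ih _ (by omega) a ha

lemma lastD_expand1_inj (m n : ℕ) (hm : 0 < m) (hn : 0 < n) :
    ∀ (w : List ℕ), w ≠ [] → (∀ a ∈ w, 0 < a) →
    ∀ x₁ x₂ : ℕ, (x₁ = m ∨ x₁ = n) → (x₂ = m ∨ x₂ = n) →
    (expand1 m n x₁ w).getLastD 0 = (expand1 m n x₂ w).getLastD 0 → x₁ = x₂ := by
  intro w
  induction w with
  | nil => intro h; exact absurd rfl h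
  | cons a l ih =>
    intro _ hp x₁ x₂ hx₁ hx₂ h
    cases l with
    | nil =>
      have ha := hp a (by simp)
      simp only [expand1, List.append_nil] at h
      rw [List.getLastD_eq_getLast?, List.getLastD_eq_getLast?,
        List.getLast?_replicate, List.getLast?_replicate] at h
      simpa [Nat.pos_iff_ne_zero.mp ha] using h
    | cons b l' =>
      rw [show expand1 m n x₁ (a :: b :: l') = List.replicate a x₁ ++ expand1 m n (m+n-x₁) (b :: l') from rfl,
          show expand1 m n x₂ (a :: b :: l') = List.replicate a x₂ ++ expand1 m n (m+n-x₂) (b :: l') from rfl] at h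
      rw [getLastD_append_right _ _ (expand1_ne_nil m n _ _ (by simp) (fun a ha => hp a (List.mem_cons_of_mem _ ha))),
          getLastD_append_right _ _ (expand1_ne_nil m n _ _ (by simp) (fun a ha => hp a (List.mem_cons_of_mem _ ha)))] at h
      have h2 := ih (by simp) (fun a ha => hp a (List.mem_cons_of_mem _ ha)) _ _
        (by omega) (by omega) h
      rcases hx₁ with rfl | rfl <;> rcases hx₂ with rfl | rfl <;> omega

lemma expand_append (m n : ℕ) : ∀ (u v s : List ℕ),
    expand m n s (u ++ v) = expand m n (expand m n s u) v := by
  intro u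
  induction u with
  | nil => intro v s; rfl
  | cons x u ih => intro v s; simp only [List.cons_append, expand]; exact ih v _

lemma expand_ne_nil_pos (m n : ℕ) (hm : 0 < m) (hn : 0 < n) :
    ∀ (u : List ℕ), (∀ a ∈ u, a = m ∨ a = n) →
    ∀ s : List ℕ, s ≠ [] → (∀ a ∈ s, 0 < a) →
    expand m n s u ≠ [] ∧ ∀ a ∈ expand m n s u, 0 < a := by
  intro u
  induction u with
  | nil => intro _ s h1 h2; exact ⟨h1, h2⟩
  | cons x u ih =>
    intro hv s h1 h2
    have hx := hv x (by simp)
    refine ih (fun a ha => hv a (List.mem_cons_of_mem _ ha)) _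
      (expand1_ne_nil m n x s h1 h2) ?_
    intro a ha
    rcases mem_expand1 m n s x hx a ha with rfl | rfl <;> assumption

lemma mem_expand (m n : ℕ) (hm : 0 < m) (hn : 0 < n) :
    ∀ (u : List ℕ), u ≠ [] → (∀ a ∈ u, a = m ∨ a = n) →
    ∀ s : List ℕ, s ≠ [] → (∀ a ∈ s, 0 < a) →
    ∀ a ∈ expand m n s u, a = m ∨ a = n := by
  intro u
  induction u with
  | nil => intro h; exact absurd rfl h
  | cons x u ih =>
    intro _ hv s h1 h2
    have hx := hv x (by simp)
    have hmem := mem_expand1 m n s x hx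
    cases u with
    | nil => exact hmem
    | cons y u' =>
      exact ih (by simp) (fun a ha => hv a (List.mem_cons_of_mem _ ha)) _
        (expand1_ne_nil m n x s h1 h2)
        (fun a ha => by rcases hmem a ha with rfl | rfl <;> assumption)

lemma getLastD_mem (l : List ℕ) (h : l ≠ []) (d : ℕ) : l.getLastD d ∈ l := by
  rw [List.getLastD_eq_getLast?, List.getLast?_eq_getLast h]
  exact List.getLast_mem h


/-- For `k ≥ j > 0` and `t⁽¹⁾, t⁽²⁾ ∈ {m, n}^k`, the sequences `t⁽¹⁾, t⁽²⁾` agree in their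
first `j` terms iff `C_{m,n}(s, t⁽¹⁾), C_{m,n}(s, t⁽²⁾)` agree in their first `j` terms. -/
theorem torsion_take_agree_iff (m n : ℕ) (hm : 0 < m) (hn : 0 < n) (hmn : m ≠ n)
    (s : List ℕ) (hs : s ≠ []) (hsp : ∀ a ∈ s, 0 < a)
    (j k : ℕ) (hj : 0 < j) (hjk : j ≤ k)
    (t₁ t₂ : List ℕ) (ht₁l : t₁.length = k) (ht₂l : t₂.length = k)
    (ht₁v : ∀ a ∈ t₁, a = m ∨ a = n) (ht₂v : ∀ a ∈ t₂, a = m ∨ a = n) :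
    t₁.take j = t₂.take j ↔ (torsion m n s t₁).take j = (torsion m n s t₂).take j := by
  have hlen : ∀ t : List ℕ, t.length = k → (torsion m n s t).take j
      = (List.range j).map (fun i => m + n - (expand m n s (t.take (i+1))).getLastD 0) := by
    intro t ht
    rw [torsion, ← List.map_take, List.take_range, ht, Nat.min_eq_left hjk]
  rw [hlen t₁ ht₁l, hlen t₂ ht₂l, List.map_eq_map_iff]
  simp only [List.mem_range]
  -- lastD values are in {m,n}
  have hlast : ∀ t : List ℕ, t.length = k → (∀ a ∈ t, a = m ∨ a = n) → ∀ i, i < k →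
      (expand m n s (t.take (i+1))).getLastD 0 = m ∨
      (expand m n s (t.take (i+1))).getLastD 0 = n := by
    intro t ht htv i hi
    have hne : t.take (i+1) ≠ [] := by
      have : (t.take (i+1)).length = i+1 := by rw [List.length_take]; omega
      intro hc; rw [hc] at this; simp at this
    have hv : ∀ a ∈ t.take (i+1), a = m ∨ a = n := fun a ha => htv a (List.mem_of_mem_take ha)
    exact mem_expand m n hm hn _ hne hv s hs hsp _
      (getLastD_mem _ (expand_ne_nil_pos m n hm hn _ hv s hs hsp).1 0)
  constructor
  · intro h i hi
    have hkey : t₁.take (i+1) = t₂.take (i+1) := by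
      rw [show t₁.take (i+1) = (t₁.take j).take (i+1) by
            rw [List.take_take, Nat.min_eq_left (by omega)], h,
          List.take_take, Nat.min_eq_left (by omega)]
    rw [hkey]
  · intro h
    have main : ∀ i ≤ j, t₁.take i = t₂.take i := by
      intro i
      induction i with
      | zero => simp
      | succ i ih =>
        intro hi
        have htk : t₁.take i = t₂.take i := ih (by omega)
        have hik : i < k := by omega
        have h1 : t₁.take (i+1) = t₁.take i ++ [t₁[i]'(by omega)] := by
          rw [List.take_succ, List.getElem?_eq_getElem (by omega)]; rfl
        have h2 : t₂.take (i+1) = t₂.take i ++ [t₂[i]'(by omega)] := by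
          rw [List.take_succ, List.getElem?_eq_getElem (by omega)]; rfl
        have hE := h i (by omega)
        have hA := hlast t₁ ht₁l ht₁v i hik
        have hB := hlast t₂ ht₂l ht₂v i hik
        have hE' : (expand m n s (t₁.take (i+1))).getLastD 0
            = (expand m n s (t₂.take (i+1))).getLastD 0 := by omega
        rw [h1, h2, ← htk] at hE'
        rw [expand_append, expand_append] at hE'
        have hw := expand_ne_nil_pos m n hm hn (t₁.take i)
          (fun a ha => ht₁v a (List.mem_of_mem_take ha)) s hs hsp
        have hx : t₁[i]'(by omega) = t₂[i]'(by omega) := by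
          refine lastD_expand1_inj m n hm hn _ hw.1 hw.2 _ _
            (ht₁v _ (List.getElem_mem _)) (ht₂v _ (List.getElem_mem _)) ?_
          simpa [expand, expand1] using hE'
        rw [h1, h2, htk, hx]
    exact main j le_rfl
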